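/- There exist constants C₀ ≥ 1 and c ≥ 1 such that for all natural numbers M ≥ 1 and N with N ≥ C₀ · M, every real polynomial p of degree at most M − 1 satisfies sup_{x ∈ [−1,1]} |p(x)| ≤ c · max_{1 ≤ k ≤ N} |p(x_k)|, where x_k = cos((2k − 1)π / (2N)), k = 1, …, N, are the N Chebyshev nodes in [−1, 1]. -/

import Mathlib

open Real

open Finset Polynomial

noncomputable def chebNode (N k : ℕ) : ℝ := (2 * (k : ℝ) + 1) * π / (2 * N)

lemma sum_cos_node (N : ℕ) (hN : 0 < N) (d : ℕ) (hd0 : d ≠ 0) (hd : d < 2*N) :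
    ∑ k ∈ range N, Real.cos (d * chebNode N k) = 0 := by
  have hNne : (N:ℝ) ≠ 0 := Nat.cast_ne_zero.mpr hN.ne'
  set s := Real.sin ((d:ℝ) * π / (2*N)) with hs
  have hspos : 0 < s := by
    apply Real.sin_pos_of_pos_of_lt_pi
    · positivity
    · rw [div_lt_iff₀ (by positivity)]
      have : (d:ℝ) < 2*N := by exact_mod_cast hd
      nlinarith [Real.pi_pos]
  have key : ∀ k : ℕ, 2 * s * Real.cos ((d:ℝ) * chebNode N k)
      = Real.sin ((d:ℝ) * (k+1) * π / N) - Real.sin ((d:ℝ) * k * π / N) := by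
    intro k
    have e1 : (d:ℝ) * (k+1) * π / N = (d:ℝ) * chebNode N k + (d:ℝ) * π / (2*N) := by
      unfold chebNode; field_simp; ring
    have e2 : (d:ℝ) * k * π / N = (d:ℝ) * chebNode N k - (d:ℝ) * π / (2*N) := by
      unfold chebNode; field_simp; ring
    rw [e1, e2, Real.sin_add, Real.sin_sub, hs]; ring
  have tele : ∑ k ∈ range N, (2 * s * Real.cos ((d:ℝ) * chebNode N k)) = 0 := by
    calc ∑ k ∈ range N, (2 * s * Real.cos ((d:ℝ) * chebNode N k))
        = ∑ k ∈ range N, (Real.sin ((d:ℝ) * (k+1) * π / N) - Real.sin ((d:ℝ) * k * π / N)) := by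
          exact Finset.sum_congr rfl fun k _ => key k
      _ = Real.sin ((d:ℝ) * N * π / N) - Real.sin ((d:ℝ) * 0 * π / N) := by
          have := Finset.sum_range_sub (fun k : ℕ => Real.sin ((d:ℝ) * k * π / N)) N
          push_cast at this ⊢
          exact this
      _ = 0 := by
          rw [show (d:ℝ) * N * π / N = d * π by field_simp]
          simp [Real.sin_nat_mul_pi]
  rw [← Finset.mul_sum] at tele
  have : 2 * s ≠ 0 := by positivity
  exact (mul_eq_zero.mp tele).resolve_left this

lemma sum_cos_node_int (N : ℕ) (hN : 0 < N) (d : ℤ) (hd : d.natAbs < 2*N) :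
    ∑ k ∈ range N, Real.cos ((d:ℝ) * chebNode N k) = if d = 0 then (N:ℝ) else 0 := by
  by_cases h0 : d = 0
  · simp [h0]
  · rw [if_neg h0]
    have hcast : ((d:ℝ)) = (d.natAbs:ℝ) ∨ ((d:ℝ)) = -(d.natAbs:ℝ) := by
      rcases Int.natAbs_eq d with h | h
      · left; rw [h]; simp [Int.natAbs_abs, Nat.cast_natAbs]
      · right; rw [h]; simp [Int.natAbs_abs, Nat.cast_natAbs]
    have hcos : ∀ k, Real.cos ((d:ℝ) * chebNode N k) = Real.cos ((d.natAbs:ℝ) * chebNode N k) := by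
      intro k
      rcases hcast with h | h
      · rw [h]
      · rw [h, show -(d.natAbs:ℝ) * chebNode N k = -((d.natAbs:ℝ) * chebNode N k) by ring, Real.cos_neg]
    simp_rw [hcos]
    exact sum_cos_node N hN d.natAbs (by omega) hd

lemma cheb_orth (N : ℕ) (hN : 0 < N) (l : ℕ) (d : ℤ) (h : l + d.natAbs < 2*N) :
    ∑ k ∈ range N, Real.cos ((l:ℝ) * chebNode N k) * Real.cos ((d:ℝ) * chebNode N k)
      = (N:ℝ)/2 * ((if d = (l:ℤ) then 1 else 0) + (if d = -(l:ℤ) then 1 else 0)) := by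
  have key : ∀ k : ℕ, Real.cos ((l:ℝ) * chebNode N k) * Real.cos ((d:ℝ) * chebNode N k)
      = (Real.cos ((((l:ℤ)+d : ℤ):ℝ) * chebNode N k) + Real.cos ((((l:ℤ)-d : ℤ):ℝ) * chebNode N k)) / 2 := by
    intro k
    have h1 : (((l:ℤ)+d : ℤ):ℝ) * chebNode N k = (l:ℝ) * chebNode N k + (d:ℝ) * chebNode N k := by
      push_cast; ring
    have h2 : (((l:ℤ)-d : ℤ):ℝ) * chebNode N k = (l:ℝ) * chebNode N k - (d:ℝ) * chebNode N k := by
      push_cast; ring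
    rw [h1, h2, Real.cos_add, Real.cos_sub]; ring
  simp_rw [key]
  rw [← Finset.sum_div, Finset.sum_add_distrib,
    sum_cos_node_int N hN ((l:ℤ)+d) (by omega), sum_cos_node_int N hN ((l:ℤ)-d) (by omega)]
  have e1 : ((l:ℤ) + d = 0) ↔ (d = -(l:ℤ)) := by omega
  have e2 : ((l:ℤ) - d = 0) ↔ (d = (l:ℤ)) := by omega
  simp only [e1, e2]
  split_ifs <;> ring

noncomputable def chebP (n : ℕ) (θ φ : ℝ) : ℝ :=
  ∑ j ∈ range (n+1), ∑ k ∈ range (n+1),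
    Real.cos ((((j:ℤ)-(k:ℤ) : ℤ):ℝ) * θ) * Real.cos ((((j:ℤ)-(k:ℤ) : ℤ):ℝ) * φ)

lemma cos_sq_sum (n : ℕ) (t : ℝ) :
    (∑ j ∈ range (n+1), Real.cos (j * t))^2 + (∑ j ∈ range (n+1), Real.sin (j * t))^2
      = ∑ j ∈ range (n+1), ∑ k ∈ range (n+1), Real.cos ((((j:ℤ)-(k:ℤ) : ℤ):ℝ) * t) := by
  rw [sq, sq, Finset.sum_mul_sum, Finset.sum_mul_sum, ← Finset.sum_add_distrib]
  refine Finset.sum_congr rfl fun j _ => ?_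
  rw [← Finset.sum_add_distrib]
  refine Finset.sum_congr rfl fun k _ => ?_
  have h1 : (((j:ℤ)-(k:ℤ) : ℤ):ℝ) * t = (j:ℝ) * t - (k:ℝ) * t := by push_cast; ring
  rw [h1, Real.cos_sub]

lemma chebP_eq (n : ℕ) (θ φ : ℝ) : chebP n θ φ =
    (((∑ j ∈ range (n+1), Real.cos (j * (φ - θ)))^2 + (∑ j ∈ range (n+1), Real.sin (j * (φ - θ)))^2)
    + ((∑ j ∈ range (n+1), Real.cos (j * (φ + θ)))^2 + (∑ j ∈ range (n+1), Real.sin (j * (φ + θ)))^2)) / 2 := by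
  rw [cos_sq_sum n (φ - θ), cos_sq_sum n (φ + θ)]
  unfold chebP
  rw [← Finset.sum_add_distrib, Finset.sum_div]
  refine Finset.sum_congr rfl fun j _ => ?_
  rw [← Finset.sum_add_distrib, Finset.sum_div]
  refine Finset.sum_congr rfl fun k _ => ?_
  have h1 : (((j:ℤ)-(k:ℤ) : ℤ):ℝ) * (φ - θ) = (((j:ℤ)-(k:ℤ):ℤ):ℝ) * φ - (((j:ℤ)-(k:ℤ):ℤ):ℝ) * θ := by ring
  have h2 : (((j:ℤ)-(k:ℤ) : ℤ):ℝ) * (φ + θ) = (((j:ℤ)-(k:ℤ):ℤ):ℝ) * φ + (((j:ℤ)-(k:ℤ):ℤ):ℝ) * θ := by ring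
  rw [h1, h2, Real.cos_sub, Real.cos_add]; ring

lemma chebP_nonneg (n : ℕ) (θ φ : ℝ) : 0 ≤ chebP n θ φ := by
  rw [chebP_eq]; positivity

lemma count_diag (n l : ℕ) (hl : l ≤ n) (c : ℝ) :
    ∑ j ∈ range (n+1), ∑ k ∈ range (n+1), (if (j:ℤ)-(k:ℤ) = (l:ℤ) then c else 0)
      = ((n:ℝ)+1-l) * c := by
  have inner : ∀ j ∈ range (n+1), (∑ k ∈ range (n+1), (if (j:ℤ)-(k:ℤ) = (l:ℤ) then c else 0))
      = if l ≤ j then c else 0 := by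
    intro j hj
    rw [Finset.mem_range] at hj
    by_cases h : l ≤ j
    · rw [if_pos h]
      have cond : ∀ k : ℕ, ((j:ℤ)-(k:ℤ) = (l:ℤ)) ↔ (k = j - l) := by intro k; omega
      simp_rw [cond]
      rw [Finset.sum_ite_eq' (range (n+1)) (j - l) (fun _ => c), if_pos (by rw [Finset.mem_range]; omega)]
    · rw [if_neg h]
      refine Finset.sum_eq_zero fun k _ => ?_
      rw [if_neg (by omega)]
  rw [Finset.sum_congr rfl inner, Finset.sum_ite, Finset.sum_const, Finset.sum_const,
    smul_zero, add_zero]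
  have : Finset.filter (fun j => l ≤ j) (range (n+1)) = Finset.Ico l (n+1) := by
    ext j; simp [Finset.mem_Ico]; omega
  rw [this, Nat.card_Ico, nsmul_eq_mul]
  have : ((n + 1 - l : ℕ) : ℝ) = (n:ℝ) + 1 - l := by
    have : l ≤ n + 1 := by omega
    push_cast [Nat.cast_sub this]; ring
  rw [this]

lemma count_diag_neg (n l : ℕ) (hl : l ≤ n) (c : ℝ) :
    ∑ j ∈ range (n+1), ∑ k ∈ range (n+1), (if (j:ℤ)-(k:ℤ) = -(l:ℤ) then c else 0)
      = ((n:ℝ)+1-l) * c := by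
  have inner : ∀ j ∈ range (n+1), (∑ k ∈ range (n+1), (if (j:ℤ)-(k:ℤ) = -(l:ℤ) then c else 0))
      = if j + l ≤ n then c else 0 := by
    intro j hj
    rw [Finset.mem_range] at hj
    by_cases h : j + l ≤ n
    · rw [if_pos h]
      have cond : ∀ k : ℕ, ((j:ℤ)-(k:ℤ) = -(l:ℤ)) ↔ (k = j + l) := by intro k; omega
      simp_rw [cond]
      rw [Finset.sum_ite_eq' (range (n+1)) (j + l) (fun _ => c), if_pos (by rw [Finset.mem_range]; omega)]
    · rw [if_neg h]
      refine Finset.sum_eq_zero fun k hk => ?_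
      rw [Finset.mem_range] at hk
      rw [if_neg (by omega)]
  rw [Finset.sum_congr rfl inner, Finset.sum_ite, Finset.sum_const, Finset.sum_const,
    smul_zero, add_zero]
  have : Finset.filter (fun j => j + l ≤ n) (range (n+1)) = Finset.range (n+1-l) := by
    ext j; simp; omega
  rw [this, Finset.card_range, nsmul_eq_mul]
  have : ((n + 1 - l : ℕ) : ℝ) = (n:ℝ) + 1 - l := by
    have : l ≤ n + 1 := by omega
    push_cast [Nat.cast_sub this]; ring
  rw [this]

lemma sum_P (N : ℕ) (hN : 0 < N) (n : ℕ) (hn : n < 2*N) (θ : ℝ) :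
    ∑ κ ∈ range N, chebP n θ (chebNode N κ) = (N:ℝ) * ((n:ℝ)+1) := by
  unfold chebP
  rw [Finset.sum_comm]
  have step : ∀ j ∈ range (n+1),
      (∑ κ ∈ range N, ∑ k ∈ range (n+1),
        Real.cos ((((j:ℤ)-(k:ℤ):ℤ):ℝ) * θ) * Real.cos ((((j:ℤ)-(k:ℤ):ℤ):ℝ) * chebNode N κ))
      = (N:ℝ) := by
    intro j hj
    rw [Finset.mem_range] at hj
    rw [Finset.sum_comm]
    have inner : ∀ k ∈ range (n+1),
        (∑ κ ∈ range N, Real.cos ((((j:ℤ)-(k:ℤ):ℤ):ℝ) * θ) * Real.cos ((((j:ℤ)-(k:ℤ):ℤ):ℝ) * chebNode N κ))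
        = if (j:ℤ)-(k:ℤ) = 0 then (N:ℝ) else 0 := by
      intro k hk
      rw [Finset.mem_range] at hk
      rw [← Finset.mul_sum, sum_cos_node_int N hN ((j:ℤ)-(k:ℤ)) (by omega)]
      by_cases h : (j:ℤ)-(k:ℤ) = 0
      · rw [if_pos h, h]; push_cast; simp
      · rw [if_neg h, mul_zero]
    rw [Finset.sum_congr rfl inner]
    have cond : ∀ k : ℕ, ((j:ℤ)-(k:ℤ) = 0) ↔ (k = j) := by intro k; omega
    simp_rw [cond]
    rw [Finset.sum_ite_eq' (range (n+1)) j (fun _ => (N:ℝ)), if_pos (by rw [Finset.mem_range]; omega)]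
  rw [Finset.sum_congr rfl step, Finset.sum_const, Finset.card_range, nsmul_eq_mul]
  push_cast; ring

lemma repro_P (N : ℕ) (hN : 0 < N) (n l : ℕ) (hl : l ≤ n) (h2 : l + n < 2*N) (θ : ℝ) :
    ∑ κ ∈ range N, Real.cos ((l:ℝ) * chebNode N κ) * chebP n θ (chebNode N κ)
      = (N:ℝ) * ((n:ℝ)+1-l) * Real.cos (l * θ) := by
  unfold chebP
  have expand : ∀ κ ∈ range N, Real.cos ((l:ℝ) * chebNode N κ) *
      (∑ j ∈ range (n+1), ∑ k ∈ range (n+1),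
        Real.cos ((((j:ℤ)-(k:ℤ):ℤ):ℝ) * θ) * Real.cos ((((j:ℤ)-(k:ℤ):ℤ):ℝ) * chebNode N κ))
      = ∑ j ∈ range (n+1), ∑ k ∈ range (n+1),
          Real.cos ((((j:ℤ)-(k:ℤ):ℤ):ℝ) * θ) *
            (Real.cos ((l:ℝ) * chebNode N κ) * Real.cos ((((j:ℤ)-(k:ℤ):ℤ):ℝ) * chebNode N κ)) := by
    intro κ _
    rw [Finset.mul_sum]
    refine Finset.sum_congr rfl fun j _ => ?_
    rw [Finset.mul_sum]
    refine Finset.sum_congr rfl fun k _ => ?_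
    ring
  rw [Finset.sum_congr rfl expand, Finset.sum_comm]
  have step : ∀ j ∈ range (n+1),
      (∑ κ ∈ range N, ∑ k ∈ range (n+1),
        Real.cos ((((j:ℤ)-(k:ℤ):ℤ):ℝ) * θ) *
          (Real.cos ((l:ℝ) * chebNode N κ) * Real.cos ((((j:ℤ)-(k:ℤ):ℤ):ℝ) * chebNode N κ)))
      = ∑ k ∈ range (n+1),
          ((if (j:ℤ)-(k:ℤ) = (l:ℤ) then (N:ℝ)/2 * Real.cos (l*θ) else 0)
           + (if (j:ℤ)-(k:ℤ) = -(l:ℤ) then (N:ℝ)/2 * Real.cos (l*θ) else 0)) := by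
    intro j hj
    rw [Finset.mem_range] at hj
    rw [Finset.sum_comm]
    refine Finset.sum_congr rfl fun k hk => ?_
    rw [Finset.mem_range] at hk
    rw [← Finset.mul_sum, cheb_orth N hN l ((j:ℤ)-(k:ℤ)) (by omega)]
    by_cases hc1 : (j:ℤ)-(k:ℤ) = (l:ℤ) <;> by_cases hc2 : (j:ℤ)-(k:ℤ) = -(l:ℤ)
    · -- both: l = 0, d = 0
      have hl0 : (l:ℤ) = 0 := by omega
      rw [if_pos hc1, if_pos hc2, if_pos hc1, if_pos hc2]
      have : (((j:ℤ)-(k:ℤ):ℤ):ℝ) = (l:ℝ) := by exact_mod_cast hc1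
      rw [this]; ring
    · rw [if_pos hc1, if_neg hc2, if_pos hc1, if_neg hc2]
      have : (((j:ℤ)-(k:ℤ):ℤ):ℝ) = (l:ℝ) := by exact_mod_cast hc1
      rw [this]; ring
    · rw [if_neg hc1, if_pos hc2, if_neg hc1, if_pos hc2]
      have : (((j:ℤ)-(k:ℤ):ℤ):ℝ) = -(l:ℝ) := by exact_mod_cast hc2
      rw [this, neg_mul, Real.cos_neg]; ring
    · rw [if_neg hc1, if_neg hc2, if_neg hc1, if_neg hc2]; ring
  rw [Finset.sum_congr rfl step]
  simp only [Finset.sum_add_distrib]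
  rw [count_diag n l hl, count_diag_neg n l hl]
  ring

noncomputable def chebW (m : ℕ) (θ φ : ℝ) : ℝ :=
  2/(2*(m:ℝ)+2) * chebP (2*m+1) θ φ - 1/((m:ℝ)+1) * chebP m θ φ

lemma repro_W (N : ℕ) (hN : 0 < N) (m l : ℕ) (hl : l ≤ m) (h : 3*m+1 < 2*N) (θ : ℝ) :
    ∑ κ ∈ range N, Real.cos ((l:ℝ) * chebNode N κ) * chebW m θ (chebNode N κ)
      = (N:ℝ) * Real.cos (l * θ) := by
  unfold chebW
  have expand : ∀ κ ∈ range N, Real.cos ((l:ℝ) * chebNode N κ) *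
      (2/(2*(m:ℝ)+2) * chebP (2*m+1) θ (chebNode N κ) - 1/((m:ℝ)+1) * chebP m θ (chebNode N κ))
      = 2/(2*(m:ℝ)+2) * (Real.cos ((l:ℝ) * chebNode N κ) * chebP (2*m+1) θ (chebNode N κ))
        - 1/((m:ℝ)+1) * (Real.cos ((l:ℝ) * chebNode N κ) * chebP m θ (chebNode N κ)) := by
    intro κ _; ring
  rw [Finset.sum_congr rfl expand, Finset.sum_sub_distrib, ← Finset.mul_sum, ← Finset.mul_sum,
    repro_P N hN (2*m+1) l (by omega) (by omega) θ, repro_P N hN m l hl (by omega) θ]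
  have hm : ((m:ℝ)+1) ≠ 0 := by positivity
  push_cast
  field_simp
  ring
lemma bound_W (N : ℕ) (hN : 0 < N) (m : ℕ) (h : 2*m+1 < 2*N) (θ : ℝ) :
    ∑ κ ∈ range N, |chebW m θ (chebNode N κ)| ≤ 3*(N:ℝ) := by
  have hc1 : (0:ℝ) ≤ 2/(2*(m:ℝ)+2) := by positivity
  have hc2 : (0:ℝ) ≤ 1/((m:ℝ)+1) := by positivity
  have hub : ∀ κ ∈ range N, |chebW m θ (chebNode N κ)| ≤
      2/(2*(m:ℝ)+2) * chebP (2*m+1) θ (chebNode N κ) + 1/((m:ℝ)+1) * chebP m θ (chebNode N κ) := by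
    intro κ _
    unfold chebW
    refine (abs_sub _ _).trans ?_
    rw [abs_of_nonneg (mul_nonneg hc1 (chebP_nonneg _ _ _)),
      abs_of_nonneg (mul_nonneg hc2 (chebP_nonneg _ _ _))]
  refine (Finset.sum_le_sum hub).trans ?_
  rw [Finset.sum_add_distrib, ← Finset.mul_sum, ← Finset.mul_sum,
    sum_P N hN (2*m+1) (by omega) θ, sum_P N hN m (by omega) θ]
  have e : (2:ℝ)/(2*(m:ℝ)+2) * ((N:ℝ)*(((2*m+1:ℕ):ℝ)+1)) + 1/((m:ℝ)+1) * ((N:ℝ)*((m:ℝ)+1)) = 3*(N:ℝ) := by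
    have hm : ((m:ℝ)+1) ≠ 0 := by positivity
    push_cast
    field_simp
    ring
  exact le_of_eq e

lemma main_trig (N : ℕ) (hN : 0 < N) (m : ℕ) (h : 3*m+1 < 2*N) (a : ℕ → ℝ) (θ : ℝ)
    (B : ℝ) (hB : ∀ κ ∈ range N, |∑ l ∈ range (m+1), a l * Real.cos (l * chebNode N κ)| ≤ B) :
    |∑ l ∈ range (m+1), a l * Real.cos (l * θ)| ≤ 3 * B := by
  set q : ℝ → ℝ := fun t => ∑ l ∈ range (m+1), a l * Real.cos (l * t) with hq
  have key : (N:ℝ) * q θ = ∑ κ ∈ range N, q (chebNode N κ) * chebW m θ (chebNode N κ) := by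
    have expand : ∀ κ ∈ range N, q (chebNode N κ) * chebW m θ (chebNode N κ)
        = ∑ l ∈ range (m+1), a l * (Real.cos ((l:ℝ) * chebNode N κ) * chebW m θ (chebNode N κ)) := by
      intro κ _
      rw [hq]
      simp only
      rw [Finset.sum_mul]
      exact Finset.sum_congr rfl fun l _ => by ring
    rw [Finset.sum_congr rfl expand, Finset.sum_comm]
    have step : ∀ l ∈ range (m+1),
        (∑ κ ∈ range N, a l * (Real.cos ((l:ℝ) * chebNode N κ) * chebW m θ (chebNode N κ)))
        = a l * ((N:ℝ) * Real.cos (l * θ)) := by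
      intro l hl
      rw [Finset.mem_range] at hl
      rw [← Finset.mul_sum, repro_W N hN m l (by omega) h θ]
    rw [Finset.sum_congr rfl step, hq]
    simp only
    rw [Finset.mul_sum]
    exact Finset.sum_congr rfl fun l _ => by ring
  have hB0 : 0 ≤ B := le_trans (abs_nonneg _) (hB 0 (Finset.mem_range.mpr hN))
  have bnd : |(N:ℝ) * q θ| ≤ B * (3 * N) := by
    rw [key]
    refine (Finset.abs_sum_le_sum_abs _ _).trans ?_
    have : ∀ κ ∈ range N, |q (chebNode N κ) * chebW m θ (chebNode N κ)|
        ≤ B * |chebW m θ (chebNode N κ)| := by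
      intro κ hκ
      rw [abs_mul]
      exact mul_le_mul_of_nonneg_right (hB κ hκ) (abs_nonneg _)
    refine (Finset.sum_le_sum this).trans ?_
    rw [← Finset.mul_sum]
    exact mul_le_mul_of_nonneg_left (bound_W N hN m (by omega) θ) hB0
  have hNpos : (0:ℝ) < N := by exact_mod_cast hN
  rw [abs_mul, abs_of_pos hNpos] at bnd
  calc |q θ| = ((N:ℝ) * |q θ|) / N := by field_simp
    _ ≤ (B * (3*N)) / N := by gcongr
    _ = 3 * B := by field_simp

lemma T_deg_coeff : ∀ n : ℕ, (Polynomial.Chebyshev.T ℝ (n:ℤ)).natDegree ≤ n ∧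
    (Polynomial.Chebyshev.T ℝ (n:ℤ)).coeff n = 2^(n-1) := by
  intro n
  induction n using Nat.strong_induction_on with
  | _ n ih =>
    match n with
    | 0 => simp [Polynomial.Chebyshev.T_zero]
    | 1 => simp [Polynomial.Chebyshev.T_one]
    | (n+2) =>
      have h1 := ih (n+1) (by omega)
      have h0 := ih n (by omega)
      have hrec : Polynomial.Chebyshev.T ℝ ((n+2:ℕ):ℤ)
          = 2 * Polynomial.X * Polynomial.Chebyshev.T ℝ ((n+1:ℕ):ℤ) - Polynomial.Chebyshev.T ℝ (n:ℤ) := by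
        have := Polynomial.Chebyshev.T_add_two ℝ (n:ℤ)
        push_cast
        convert this using 2 <;> push_cast <;> ring
      constructor
      · rw [hrec]
        refine (Polynomial.natDegree_sub_le _ _).trans ?_
        refine max_le ?_ (h0.1.trans (by omega))
        refine (Polynomial.natDegree_mul_le).trans ?_
        have : (2 * Polynomial.X : ℝ[X]).natDegree ≤ 1 := by
          refine (Polynomial.natDegree_mul_le).trans ?_
          simp
        omega
      · rw [hrec]
        rw [Polynomial.coeff_sub]
        have hz : (Polynomial.Chebyshev.T ℝ (n:ℤ)).coeff (n+2) = 0 :=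
          Polynomial.coeff_eq_zero_of_natDegree_lt (by omega)
        have hx : (2 * Polynomial.X * Polynomial.Chebyshev.T ℝ ((n+1:ℕ):ℤ)).coeff (n+2)
            = 2 * (Polynomial.Chebyshev.T ℝ ((n+1:ℕ):ℤ)).coeff (n+1) := by
          rw [show (2 * Polynomial.X * Polynomial.Chebyshev.T ℝ ((n+1:ℕ):ℤ) : ℝ[X])
            = Polynomial.C 2 * (Polynomial.X * Polynomial.Chebyshev.T ℝ ((n+1:ℕ):ℤ)) by
              rw [show (Polynomial.C (2:ℝ)) = (2:ℝ[X]) from map_ofNat Polynomial.C 2]; ring]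
          rw [Polynomial.coeff_C_mul, show n+2 = (n+1)+1 from rfl, Polynomial.coeff_X_mul]
        rw [hx, hz, h1.2, sub_zero]
        have : n + 1 - 1 = n := by omega
        rw [this, show n + 2 - 1 = n + 1 by omega]
        ring

lemma cheb_expand : ∀ (m : ℕ) (p : ℝ[X]), p.natDegree ≤ m →
    ∃ a : ℕ → ℝ, ∀ θ : ℝ, p.eval (Real.cos θ) = ∑ l ∈ range (m+1), a l * Real.cos (l * θ) := by
  intro m
  induction m with
  | zero =>
    intro p hp
    refine ⟨fun _ => p.coeff 0, fun θ => ?_⟩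
    have h0 : p.natDegree = 0 := Nat.le_zero.mp hp
    rw [Polynomial.eval_eq_sum_range, h0]
    simp
  | succ m ih =>
    intro p hp
    set c : ℝ := p.coeff (m+1) / 2^m with hc
    set q : ℝ[X] := p - Polynomial.C c * Polynomial.Chebyshev.T ℝ ((m+1:ℕ):ℤ) with hq
    have hTdeg := (T_deg_coeff (m+1)).1
    have hTcoeff := (T_deg_coeff (m+1)).2
    have hqdeg : q.natDegree ≤ m := by
      rw [Polynomial.natDegree_le_iff_coeff_eq_zero]
      intro k hk
      rw [hq, Polynomial.coeff_sub, Polynomial.coeff_C_mul]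
      rcases Nat.lt_or_ge (m+1) k with h | h
      · rw [Polynomial.coeff_eq_zero_of_natDegree_lt (lt_of_le_of_lt hp h),
          Polynomial.coeff_eq_zero_of_natDegree_lt (lt_of_le_of_lt hTdeg h)]
        ring
      · have hk1 : k = m+1 := by omega
        rw [hk1, hTcoeff, hc]
        have : (2:ℝ)^(m+1-1) = 2^m := by norm_num
        rw [this]
        field_simp; ring
    obtain ⟨a, ha⟩ := ih q hqdeg
    refine ⟨fun l => if l = m+1 then c else a l, fun θ => ?_⟩
    have hpq : p.eval (Real.cos θ) = q.eval (Real.cos θ) + c * Real.cos ((m+1) * θ) := by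
      rw [hq]
      simp only [Polynomial.eval_sub, Polynomial.eval_mul, Polynomial.eval_C]
      have := Polynomial.Chebyshev.T_real_cos θ ((m+1:ℕ):ℤ)
      rw [this]
      push_cast
      ring
    have hne : ∀ l ∈ range (m+1), (if l = m+1 then c else a l) * Real.cos (l * θ) = a l * Real.cos (l * θ) := by
      intro l hl
      rw [Finset.mem_range] at hl
      rw [if_neg (by omega)]
    have hsum : ∑ l ∈ range (m+1+1), (if l = m+1 then c else a l) * Real.cos (l * θ)
        = (∑ l ∈ range (m+1), a l * Real.cos (l * θ)) + c * Real.cos (((m+1:ℕ):ℝ) * θ) := by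
      rw [Finset.sum_range_succ, Finset.sum_congr rfl hne, if_pos rfl]
    show p.eval (Real.cos θ) = ∑ l ∈ range (m+1+1), (if l = m+1 then c else a l) * Real.cos (l * θ)
    rw [hpq, ha θ, hsum]
    push_cast
    ring

/-- Oversampling at Chebyshev nodes: there are constants `C₀ ≥ 1` and `c ≥ 1` such that
whenever `N ≥ C₀ · M`, every polynomial of degree at most `M - 1` satisfies
`‖p‖_{∞,[-1,1]} ≤ c · max_k |p(x_k)|` at the `N` Chebyshev nodes
`x_k = cos((2k-1)π/(2N))`; the stability constant is independent of `M`. -/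
theorem chebyshev_oversampling_uniform_stability :
    ∃ (C₀ : ℝ) (hC₀ : 1 ≤ C₀) (c : ℝ) (hc : 1 ≤ c),
      ∀ (M : ℕ) (hM : 1 ≤ M) (N : ℕ) (hN : C₀ * (M : ℝ) ≤ (N : ℝ)),
        ∀ p : Polynomial ℝ, p.natDegree ≤ M - 1 →
          ∀ x ∈ Set.Icc (-1 : ℝ) 1,
            |p.eval x| ≤ c *
              Finset.univ.sup'
                ⟨⟨0, by
                    have h1 : (1 : ℝ) ≤ (M : ℝ) := by exact_mod_cast hM
                    have h2 : (0 : ℝ) < (N : ℝ) := by nlinarith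
                    exact_mod_cast h2⟩, Finset.mem_univ _⟩
                (fun k : Fin N =>
                  |p.eval (Real.cos ((2 * (k : ℝ) + 1) * π / (2 * N)))|) := by
  refine ⟨4, by norm_num, 3, by norm_num, ?_⟩
  intro M hM N hN p hp x hx
  have hMN : 4 * M ≤ N := by exact_mod_cast (by push_cast; linarith : ((4 * M : ℕ) : ℝ) ≤ (N : ℝ))
  have hNpos : 0 < N := by omega
  set m : ℕ := M - 1 with hm
  have hdeg : p.natDegree ≤ m := hp
  have hfreq : 3 * m + 1 < 2 * N := by omega
  obtain ⟨a, ha⟩ := cheb_expand m p hdeg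
  set B : ℝ := Finset.univ.sup'
      ⟨⟨0, hNpos⟩, Finset.mem_univ _⟩
      (fun k : Fin N => |p.eval (Real.cos ((2 * (k : ℝ) + 1) * π / (2 * N)))|) with hB
  have hBle : ∀ κ ∈ range N, |∑ l ∈ range (m+1), a l * Real.cos (l * chebNode N κ)| ≤ B := by
    intro κ hκ
    rw [Finset.mem_range] at hκ
    rw [← ha (chebNode N κ)]
    have := Finset.le_sup' (f := fun k : Fin N => |p.eval (Real.cos ((2 * (k : ℝ) + 1) * π / (2 * N)))|)
      (Finset.mem_univ (⟨κ, hκ⟩ : Fin N))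
    exact this
  have key := main_trig N hNpos m hfreq a (Real.arccos x) B hBle
  rw [← Real.cos_arccos hx.1 hx.2, ha (Real.arccos x)]
  calc |∑ l ∈ range (m+1), a l * Real.cos (l * Real.arccos x)| ≤ 3 * B := key
    _ = 3 * B := rfl
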